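/- Let C = (C_0, C_1, ..., C_k) be a tuple of real n×n matrices. If C has the cS-W property, then for every q ∈ ℝ^n and every tuple d = (d_1, ..., d_{k-1}) of positive vectors in ℝ^n, the solution set SOL(C, d, q) of EHLCP(C, d, q) is a convex subset of (ℝ^n)^{k+1}. -/

import Mathlib

open Matrix Finset

/-- `R` is a column representative matrix of the tuple `C = (C 0, ..., C k)`:
each column of `R` is the corresponding column of some `C i`. -/
def IsColRep {n k : ℕ} (C : Fin (k+1) → Matrix (Fin n) (Fin n) ℝ)
    (R : Matrix (Fin n) (Fin n) ℝ) : Prop :=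
  ∀ j : Fin n, ∃ i : Fin (k+1), ∀ r : Fin n, R r j = C i r j

/-- The column `W`-property: all column representative matrices have determinants
that are all positive or all negative. -/
def HasColumnW {n k : ℕ} (C : Fin (k+1) → Matrix (Fin n) (Fin n) ℝ) : Prop :=
  (∀ R, IsColRep C R → 0 < R.det) ∨ (∀ R, IsColRep C R → R.det < 0)

/-- The column `W₀`-property: determinants of all column representative matrices are
all nonnegative with at least one positive, or all nonpositive with at least one negative. -/
def HasColumnW0 {n k : ℕ} (C : Fin (k+1) → Matrix (Fin n) (Fin n) ℝ) : Prop :=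
  ((∀ R, IsColRep C R → 0 ≤ R.det) ∧ (∃ R, IsColRep C R ∧ 0 < R.det)) ∨
  ((∀ R, IsColRep C R → R.det ≤ 0) ∧ (∃ R, IsColRep C R ∧ R.det < 0))

/-- The column nondegenerate-`W` (column ND-`W`) property. -/
def HasColumnNDW {n k : ℕ} (C : Fin (k+1) → Matrix (Fin n) (Fin n) ℝ) : Prop :=
  ∀ x : Fin (k+1) → Fin n → ℝ,
    C 0 *ᵥ x 0 = ∑ i : Fin k, C i.succ *ᵥ x i.succ →
    (∀ i j : Fin (k+1), i < j → x i * x j = 0) →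
    ∀ i, x i = 0

/-- The column sufficient-`W` (cS-`W`) property. -/
def HasCSW {n k : ℕ} (C : Fin (k+1) → Matrix (Fin n) (Fin n) ℝ) : Prop :=
  ∀ x : Fin (k+1) → Fin n → ℝ,
    C 0 *ᵥ x 0 = ∑ i : Fin k, C i.succ *ᵥ x i.succ →
    (∀ i : Fin k, x 0 * x i.succ ≤ 0) →
    (∀ i j : Fin k, i < j → 0 ≤ x i.succ * x j.succ) →
    ∀ i : Fin k, x i.castSucc * x i.succ = 0

/-- The cone column sufficient-`W` (cone cS-`W`) property. -/
def HasConeCSW {n k : ℕ} (C : Fin (k+1) → Matrix (Fin n) (Fin n) ℝ) : Prop :=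
  ∀ x : Fin (k+1) → Fin n → ℝ,
    C 0 *ᵥ x 0 = ∑ i : Fin k, C i.succ *ᵥ x i.succ →
    (∀ i : Fin k, 0 ≤ x i.succ) →
    (∀ i : Fin k, x 0 * x i.succ ≤ 0) →
    ∀ i : Fin k, x i.castSucc * x i.succ = 0

/-- `x = (x 0, ..., x k)` solves the extended horizontal linear complementarity
problem EHLCP(C, d, q). -/
def IsSolEHLCP {n k : ℕ} (C : Fin (k+1) → Matrix (Fin n) (Fin n) ℝ)
    (d : Fin (k-1) → Fin n → ℝ) (q : Fin n → ℝ)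
    (x : Fin (k+1) → Fin n → ℝ) : Prop :=
  C 0 *ᵥ x 0 = q + ∑ i : Fin k, C i.succ *ᵥ x i.succ ∧
  x 0 ⊓ x 1 = 0 ∧
  ∀ j : Fin (k-1),
    (d j - x ⟨j.1 + 1, by have := j.2; omega⟩) ⊓ x ⟨j.1 + 2, by have := j.2; omega⟩ = 0

namespace CsWAux

lemma min_zero_facts {a b : ℝ} (h : min a b = 0) : 0 ≤ a ∧ 0 ≤ b ∧ (a = 0 ∨ b = 0) := by
  have h1 := min_le_left a b
  have h2 := min_le_right a b
  rw [h] at h1 h2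
  refine ⟨h1, h2, ?_⟩
  rcases le_total a b with hab | hab
  · left; rw [min_eq_left hab] at h; exact h
  · right; rw [min_eq_right hab] at h; exact h

structure CoordSol (k : ℕ) (E X : ℕ → ℝ) : Prop where
  nonneg : ∀ i, 0 ≤ X i
  bound : ∀ j, 1 ≤ j → j + 1 ≤ k → X j ≤ E j
  c0 : X 0 = 0 ∨ X 1 = 0
  cj : ∀ j, 1 ≤ j → j + 1 ≤ k → X j = E j ∨ X (j + 1) = 0
  top : ∀ i, k < i → X i = 0

variable {k : ℕ} {E X Y : ℕ → ℝ}

lemma CoordSol.chain (hX : CoordSol k E X) (hE : ∀ j, 0 < E j) :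
    ∀ i j, 1 ≤ j → j < i → 0 < X i → X j = E j := by
  intro i
  induction i with
  | zero => intro j _ h2 _; exact absurd h2 (Nat.not_lt_zero j)
  | succ m ih =>
    intro j h1 h2 hpos
    have hik : m + 1 ≤ k := by
      by_contra hc
      have := hX.top (m + 1) (by omega)
      linarith
    have hm1 : 1 ≤ m := by omega
    have hm : X m = E m := by
      rcases hX.cj m hm1 hik with h | h
      · exact h
      · linarith
    rcases Nat.lt_or_ge j m with hlt | hge
    · exact ih j h1 hlt (by rw [hm]; exact hE m)
    · have hjm : j = m := by omega
      rw [hjm]; exact hm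

lemma CoordSol.zero0 (hX : CoordSol k E X) (hE : ∀ j, 0 < E j) :
    ∀ i, 1 ≤ i → 0 < X i → X 0 = 0 := by
  intro i hi hpos
  have h1 : 0 < X 1 := by
    rcases Nat.lt_or_ge 1 i with h2 | h2
    · rw [hX.chain hE i 1 le_rfl h2 hpos]; exact hE 1
    · have : i = 1 := by omega
      rw [← this]; exact hpos
  rcases hX.c0 with h | h
  · exact h
  · linarith

lemma sign0_aux (hX : CoordSol k E X) (hY : CoordSol k E Y) (hE : ∀ j, 0 < E j)
    (h : X 0 < Y 0) (i : ℕ) (hi : 1 ≤ i) : (X 0 - Y 0) * (X i - Y i) ≤ 0 := by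
  have hY0 : 0 < Y 0 := lt_of_le_of_lt (hX.nonneg 0) h
  have hY1 : Y 1 = 0 := by
    rcases hY.c0 with h' | h'
    · linarith
    · exact h'
  have hYi : Y i = 0 := by
    rcases Nat.lt_or_ge 1 i with h2 | h2
    · by_contra hc
      have hpos : 0 < Y i := (hY.nonneg i).lt_of_ne (Ne.symm hc)
      have hch := hY.chain hE i 1 le_rfl h2 hpos
      have := hE 1
      linarith
    · have : i = 1 := by omega
      rw [this]; exact hY1
  have hnn : 0 ≤ X i - Y i := by rw [hYi]; simpa using hX.nonneg i
  nlinarith [mul_nonneg (sub_nonneg.mpr h.le) hnn]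

lemma sign0 (hX : CoordSol k E X) (hY : CoordSol k E Y) (hE : ∀ j, 0 < E j)
    (i : ℕ) (hi : 1 ≤ i) : (X 0 - Y 0) * (X i - Y i) ≤ 0 := by
  rcases lt_trichotomy (X 0) (Y 0) with h | h | h
  · exact sign0_aux hX hY hE h i hi
  · rw [h, sub_self, zero_mul]
  · have h2 := sign0_aux hY hX hE h i hi
    have e : (X 0 - Y 0) * (X i - Y i) = (Y 0 - X 0) * (Y i - X i) := by ring
    rw [e]; exact h2

lemma sign1_aux (hX : CoordSol k E X) (hY : CoordSol k E Y) (hE : ∀ j, 0 < E j)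
    (i j : ℕ) (hi : 1 ≤ i) (hij : i < j) (h : X j < Y j) :
    0 ≤ (X i - Y i) * (X j - Y j) := by
  have hYj : 0 < Y j := lt_of_le_of_lt (hX.nonneg j) h
  have hjk : j ≤ k := by
    by_contra hc
    have := hY.top j (by omega)
    linarith
  have hYi : Y i = E i := hY.chain hE j i hi hij hYj
  have hXi : X i ≤ E i := hX.bound i hi (by omega)
  have h1 : 0 ≤ Y i - X i := by rw [hYi]; linarith
  have h2 := mul_nonneg h1 (sub_nonneg.mpr h.le)
  have e : (X i - Y i) * (X j - Y j) = (Y i - X i) * (Y j - X j) := by ring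
  rw [e]; exact h2

lemma sign1 (hX : CoordSol k E X) (hY : CoordSol k E Y) (hE : ∀ j, 0 < E j)
    (i j : ℕ) (hi : 1 ≤ i) (hij : i < j) : 0 ≤ (X i - Y i) * (X j - Y j) := by
  rcases lt_trichotomy (X j) (Y j) with h | h | h
  · exact sign1_aux hX hY hE i j hi hij h
  · rw [h, sub_self, mul_zero]
  · have h2 := sign1_aux hY hX hE i j hi hij h
    have e : (X i - Y i) * (X j - Y j) = (Y i - X i) * (Y j - X j) := by ring
    rw [e]; exact h2

lemma zmin0_aux (hX : CoordSol k E X) (hY : CoordSol k E Y) (hE : ∀ j, 0 < E j)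
    (hk : 1 ≤ k) {a b : ℝ} (ha : 0 ≤ a) (hb : 0 ≤ b)
    (G : ∀ i, i + 1 ≤ k → (X i - Y i) * (X (i+1) - Y (i+1)) = 0)
    (hx1 : 0 < X 1) (h0 : 0 < a * X 0 + b * Y 0) : False := by
  have hX0 : X 0 = 0 := hX.zero0 hE 1 le_rfl hx1
  rw [hX0, mul_zero, zero_add] at h0
  have hY0 : 0 < Y 0 := by
    rcases (hY.nonneg 0).lt_or_eq with h' | h'
    · exact h'
    · rw [← h', mul_zero] at h0; linarith
  have hY1 : Y 1 = 0 := by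
    rcases hY.c0 with h' | h'
    · linarith
    · exact h'
  have hG := G 0 hk
  rw [hX0, hY1] at hG
  nlinarith [mul_pos hY0 hx1]

lemma zmin0 (hX : CoordSol k E X) (hY : CoordSol k E Y) (hE : ∀ j, 0 < E j)
    (hk : 1 ≤ k) {a b : ℝ} (ha : 0 ≤ a) (hb : 0 ≤ b) (hab : a + b = 1)
    (G : ∀ i, i + 1 ≤ k → (X i - Y i) * (X (i+1) - Y (i+1)) = 0) :
    min (a * X 0 + b * Y 0) (a * X 1 + b * Y 1) = 0 := by
  have hz0 : 0 ≤ a * X 0 + b * Y 0 :=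
    add_nonneg (mul_nonneg ha (hX.nonneg 0)) (mul_nonneg hb (hY.nonneg 0))
  have hz1 : 0 ≤ a * X 1 + b * Y 1 :=
    add_nonneg (mul_nonneg ha (hX.nonneg 1)) (mul_nonneg hb (hY.nonneg 1))
  have key : a * X 0 + b * Y 0 = 0 ∨ a * X 1 + b * Y 1 = 0 := by
    by_contra hc
    push_neg at hc
    obtain ⟨h0, h1⟩ := hc
    have h0' : 0 < a * X 0 + b * Y 0 := hz0.lt_of_ne (Ne.symm h0)
    have h1' : 0 < a * X 1 + b * Y 1 := hz1.lt_of_ne (Ne.symm h1)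
    have hcases : 0 < X 1 ∨ 0 < Y 1 := by
      by_contra hc2
      push_neg at hc2
      have e1 : X 1 = 0 := le_antisymm hc2.1 (hX.nonneg 1)
      have e2 : Y 1 = 0 := le_antisymm hc2.2 (hY.nonneg 1)
      rw [e1, e2, mul_zero, mul_zero, add_zero] at h1'
      exact lt_irrefl 0 h1'
    rcases hcases with hp | hp
    · exact zmin0_aux hX hY hE hk ha hb G hp h0'
    · exact zmin0_aux hY hX hE hk hb ha
        (fun i hi => by linear_combination G i hi) hp (by linarith)
  rcases key with hkey | hkey
  · rw [hkey]; exact min_eq_left hz1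
  · rw [hkey]; exact min_eq_right hz0

lemma zminj_aux (hX : CoordSol k E X) (hY : CoordSol k E Y) (hE : ∀ j, 0 < E j)
    {a b : ℝ} (ha : 0 ≤ a) (hb : 0 ≤ b) (hab : a + b = 1)
    (G : ∀ i, i + 1 ≤ k → (X i - Y i) * (X (i+1) - Y (i+1)) = 0)
    (j : ℕ) (hj : 1 ≤ j) (hjk : j + 1 ≤ k)
    (hxj : 0 < X (j+1)) (hlt : a * X j + b * Y j < E j) : False := by
  have hXj : X j = E j := hX.chain hE (j+1) j hj (by omega) hxj
  have hEj : a * E j + b * E j = E j := by rw [← add_mul, hab, one_mul]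
  have hYne : Y j ≠ E j := by
    intro hcontr
    rw [hXj, hcontr] at hlt
    linarith
  have hYj1 : Y (j+1) = 0 := by
    by_contra hc
    have hpos : 0 < Y (j+1) := (hY.nonneg _).lt_of_ne (Ne.symm hc)
    exact hYne (hY.chain hE (j+1) j hj (by omega) hpos)
  have hYlt : Y j < E j := (hY.bound j hj hjk).lt_of_ne hYne
  have hG := G j hjk
  rw [hXj, hYj1] at hG
  nlinarith [mul_pos (sub_pos.mpr hYlt) hxj]

lemma zminj (hX : CoordSol k E X) (hY : CoordSol k E Y) (hE : ∀ j, 0 < E j)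
    {a b : ℝ} (ha : 0 ≤ a) (hb : 0 ≤ b) (hab : a + b = 1)
    (G : ∀ i, i + 1 ≤ k → (X i - Y i) * (X (i+1) - Y (i+1)) = 0)
    (j : ℕ) (hj : 1 ≤ j) (hjk : j + 1 ≤ k) :
    min (E j - (a * X j + b * Y j)) (a * X (j+1) + b * Y (j+1)) = 0 := by
  have hEj : a * E j + b * E j = E j := by rw [← add_mul, hab, one_mul]
  have hb1 : a * X j + b * Y j ≤ E j := by
    have h1 := mul_le_mul_of_nonneg_left (hX.bound j hj hjk) ha
    have h2 := mul_le_mul_of_nonneg_left (hY.bound j hj hjk) hb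
    linarith
  have hz1 : 0 ≤ a * X (j+1) + b * Y (j+1) :=
    add_nonneg (mul_nonneg ha (hX.nonneg _)) (mul_nonneg hb (hY.nonneg _))
  have key : a * X j + b * Y j = E j ∨ a * X (j+1) + b * Y (j+1) = 0 := by
    by_contra hc
    push_neg at hc
    obtain ⟨h0, h1⟩ := hc
    have hlt : a * X j + b * Y j < E j := hb1.lt_of_ne h0
    have h1' : 0 < a * X (j+1) + b * Y (j+1) := hz1.lt_of_ne (Ne.symm h1)
    have hcases : 0 < X (j+1) ∨ 0 < Y (j+1) := by
      by_contra hc2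
      push_neg at hc2
      have e1 : X (j+1) = 0 := le_antisymm hc2.1 (hX.nonneg _)
      have e2 : Y (j+1) = 0 := le_antisymm hc2.2 (hY.nonneg _)
      rw [e1, e2, mul_zero, mul_zero, add_zero] at h1'
      exact lt_irrefl 0 h1'
    rcases hcases with hp | hp
    · exact zminj_aux hX hY hE ha hb hab G j hj hjk hp hlt
    · exact zminj_aux hY hX hE hb ha (by linarith)
        (fun i hi => by linear_combination G i hi) j hj hjk hp (by linarith)
  rcases key with hkey | hkey
  · rw [hkey, sub_self]; exact min_eq_left hz1
  · rw [hkey]; exact min_eq_right (by linarith)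

def coordX {n k : ℕ} (x : Fin (k+1) → Fin n → ℝ) (r : Fin n) (i : ℕ) : ℝ :=
  if h : i ≤ k then x ⟨i, by omega⟩ r else 0

def coordE {n k : ℕ} (d : Fin (k-1) → Fin n → ℝ) (r : Fin n) (j : ℕ) : ℝ :=
  if h : 1 ≤ j ∧ j + 1 ≤ k then d ⟨j - 1, by omega⟩ r else 1

lemma coordX_pos {n k : ℕ} (x : Fin (k+1) → Fin n → ℝ) (r : Fin n) (i : ℕ) (h : i ≤ k) :
    coordX x r i = x ⟨i, by omega⟩ r := dif_pos h

lemma coordX_neg {n k : ℕ} (x : Fin (k+1) → Fin n → ℝ) (r : Fin n) (i : ℕ) (h : k < i) :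
    coordX x r i = 0 := dif_neg (by omega)

lemma coordE_pos {n k : ℕ} (d : Fin (k-1) → Fin n → ℝ) (r : Fin n) (j : ℕ)
    (h : 1 ≤ j ∧ j + 1 ≤ k) : coordE d r j = d ⟨j - 1, by omega⟩ r := dif_pos h

lemma sol_coord {n k : ℕ} (hk : 0 < k) {C : Fin (k+1) → Matrix (Fin n) (Fin n) ℝ}
    {d : Fin (k-1) → Fin n → ℝ} {q : Fin n → ℝ} {x : Fin (k+1) → Fin n → ℝ}
    (hx : IsSolEHLCP C d q x) (r : Fin n) :
    CoordSol k (coordE d r) (coordX x r) := by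
  obtain ⟨-, h01, hdj⟩ := hx
  have e0 : (0 : Fin (k+1)) = ⟨0, by omega⟩ := by ext; simp
  have e1 : (1 : Fin (k+1)) = ⟨1, by omega⟩ := by ext; simp [Fin.val_one']; omega
  have h01r : 0 ≤ x ⟨0, by omega⟩ r ∧ 0 ≤ x ⟨1, by omega⟩ r ∧
      (x ⟨0, by omega⟩ r = 0 ∨ x ⟨1, by omega⟩ r = 0) := by
    have hcf := congrFun h01 r
    rw [e0, e1] at hcf
    simp only [Pi.inf_apply, Pi.zero_apply] at hcf
    exact min_zero_facts hcf
  have hd' : ∀ m (hm : m + 2 ≤ k),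
      0 ≤ d ⟨m, by omega⟩ r - x ⟨m+1, by omega⟩ r ∧ 0 ≤ x ⟨m+2, by omega⟩ r ∧
      (d ⟨m, by omega⟩ r - x ⟨m+1, by omega⟩ r = 0 ∨ x ⟨m+2, by omega⟩ r = 0) := by
    intro m hm
    have hcf := congrFun (hdj ⟨m, by omega⟩) r
    simp only [Pi.inf_apply, Pi.sub_apply, Pi.zero_apply] at hcf
    exact min_zero_facts hcf
  constructor
  · -- nonneg
    intro i
    by_cases hik : i ≤ k
    · rw [coordX_pos x r i hik]
      match i, hik with
      | 0, _ => exact h01r.1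
      | 1, _ => exact h01r.2.1
      | (m+2), hik => exact (hd' m hik).2.1
    · rw [coordX_neg x r i (by omega)]
  · -- bound
    intro j hj hjk
    rw [coordX_pos x r j (by omega), coordE_pos d r j ⟨hj, hjk⟩]
    match j, hj, hjk with
    | (m+1), _, hjk =>
      have := (hd' m (by omega)).1
      show x ⟨m+1, by omega⟩ r ≤ d ⟨m, by omega⟩ r
      linarith
  · -- c0
    rw [coordX_pos x r 0 (by omega), coordX_pos x r 1 (by omega)]
    exact h01r.2.2
  · -- cj
    intro j hj hjk
    rw [coordX_pos x r j (by omega), coordX_pos x r (j+1) (by omega),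
      coordE_pos d r j ⟨hj, hjk⟩]
    match j, hj, hjk with
    | (m+1), _, hjk =>
      rcases (hd' m (by omega)).2.2 with hcase | hcase
      · left
        show x ⟨m+1, by omega⟩ r = d ⟨m, by omega⟩ r
        linarith
      · right
        exact hcase
  · -- top
    intro i hik
    exact coordX_neg x r i hik


end CsWAux


-- STATEMENT 7: if `C` has the cS-`W` property, then the solution set of
-- EHLCP(C, d, q) is convex for every `q` and every tuple of positive vectors `d`.
set_option maxHeartbeats 4000000 in
open CsWAux in
theorem csW_implies_convex_solution_set {n k : ℕ} (hk : 0 < k)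
    (C : Fin (k+1) → Matrix (Fin n) (Fin n) ℝ) (h : HasCSW C) :
    ∀ (q : Fin n → ℝ) (d : Fin (k-1) → Fin n → ℝ), (∀ j, ∀ r, 0 < d j r) →
      Convex ℝ {x : Fin (k+1) → Fin n → ℝ | IsSolEHLCP C d q x} := by
  intro q d hd
  intro x hx y hy a b ha hb hab
  simp only [Set.mem_setOf_eq] at hx hy ⊢
  obtain rfl : b = 1 - a := by linarith
  have hb' : (0:ℝ) ≤ 1 - a := hb
  have e0 : (0 : Fin (k+1)) = ⟨0, by omega⟩ := by ext; simp
  have e1 : (1 : Fin (k+1)) = ⟨1, by omega⟩ := by ext; simp [Fin.val_one']; omega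
  have hE : ∀ r (j : ℕ), 0 < coordE d r j := by
    intro r j
    unfold coordE
    split
    · exact hd _ r
    · exact one_pos
  have hXc : ∀ r, CoordSol k (coordE d r) (coordX x r) := fun r => sol_coord hk hx r
  have hYc : ∀ r, CoordSol k (coordE d r) (coordX y r) := fun r => sol_coord hk hy r
  -- apply cS-W to x - y
  have heq : C 0 *ᵥ (x 0 - y 0) = ∑ i : Fin k, C i.succ *ᵥ (x i.succ - y i.succ) := by
    simp only [Matrix.mulVec_sub, hx.1, hy.1, Finset.sum_sub_distrib]
    abel
  have hs1 : ∀ i : Fin k, (x 0 - y 0) * (x i.succ - y i.succ) ≤ (0 : Fin n → ℝ) := by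
    intro i
    rw [Pi.le_def]
    intro r
    have hs := sign0 (hXc r) (hYc r) (hE r) (i.1+1) (by omega)
    rw [coordX_pos x r 0 (by omega), coordX_pos y r 0 (by omega),
      coordX_pos x r (i.1+1) (by omega), coordX_pos y r (i.1+1) (by omega)] at hs
    show (x 0 r - y 0 r) * (x i.succ r - y i.succ r) ≤ 0
    rw [e0]
    exact hs
  have hs2 : ∀ i j : Fin k, i < j → (0 : Fin n → ℝ) ≤ (x i.succ - y i.succ) * (x j.succ - y j.succ) := by
    intro i j hij
    rw [Pi.le_def]
    intro r
    have hs := sign1 (hXc r) (hYc r) (hE r) (i.1+1) (j.1+1) (by omega) (by exact Nat.add_lt_add_right hij 1)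
    rw [coordX_pos x r (i.1+1) (by omega), coordX_pos y r (i.1+1) (by omega),
      coordX_pos x r (j.1+1) (by omega), coordX_pos y r (j.1+1) (by omega)] at hs
    show (0:ℝ) ≤ (x i.succ r - y i.succ r) * (x j.succ r - y j.succ r)
    exact hs
  have hG0 := h (fun i => x i - y i) heq hs1 hs2
  have hG : ∀ r (i : ℕ), i + 1 ≤ k →
      (coordX x r i - coordX y r i) * (coordX x r (i+1) - coordX y r (i+1)) = 0 := by
    intro r i hi
    have hcf := congrFun (hG0 ⟨i, by omega⟩) r
    simp only [Pi.mul_apply, Pi.sub_apply, Pi.zero_apply] at hcf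
    rw [coordX_pos x r i (by omega), coordX_pos y r i (by omega),
      coordX_pos x r (i+1) (by omega), coordX_pos y r (i+1) (by omega)]
    exact hcf
  refine ⟨?_, ?_, ?_⟩
  · -- linear equation
    show C 0 *ᵥ (a • x 0 + (1-a) • y 0) = q + ∑ i : Fin k, C i.succ *ᵥ (a • x i.succ + (1-a) • y i.succ)
    simp only [Matrix.mulVec_add, Matrix.mulVec_smul, hx.1, hy.1, Finset.sum_add_distrib,
      ← Finset.smul_sum]
    have hq : q = a • q + (1-a) • q := by rw [← add_smul]; ring_nf; rw [one_smul]
    nth_rewrite 3 [hq]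
    module
  · -- first complementarity
    funext r
    simp only [Pi.inf_apply, Pi.add_apply, Pi.smul_apply, smul_eq_mul, Pi.zero_apply]
    have hz := zmin0 (hXc r) (hYc r) (hE r) hk ha hb' (by ring) (hG r)
    rw [coordX_pos x r 0 (by omega), coordX_pos y r 0 (by omega),
      coordX_pos x r 1 (by omega), coordX_pos y r 1 (by omega)] at hz
    rw [e0, e1]
    exact hz
  · -- staircase complementarity
    intro j
    funext r
    simp only [Pi.inf_apply, Pi.sub_apply, Pi.add_apply, Pi.smul_apply, smul_eq_mul,
      Pi.zero_apply]
    have hz := zminj (hXc r) (hYc r) (hE r) ha hb' (by ring) (hG r) (j.1+1)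
      (by omega) (by have := j.2; omega)
    rw [coordX_pos x r (j.1+1) (by have := j.2; omega)] at hz
    rw [coordX_pos y r (j.1+1) (by have := j.2; omega)] at hz
    rw [coordX_pos x r (j.1+1+1) (by have := j.2; omega)] at hz
    rw [coordX_pos y r (j.1+1+1) (by have := j.2; omega)] at hz
    have ecoord : coordE d r (j.1+1) = d j r := by
      rw [coordE_pos d r (j.1+1) ⟨by omega, by have := j.2; omega⟩]
      congr 1
    rw [ecoord] at hz
    exact hz
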